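/- Let $I \subseteq (0,1]$ with $1 \in I$. With $D(I)$ as defined (the set of $a \leq 1$ of the form $\frac{m-1}{m} + \frac{f}{m}$, $m \in \mathbb{N}_{\geq 1}$, $f \in I_+$), we have $D(D(I)) = D(I)$. -/

import Mathlib

/-- `Iplus I` : the set of all finite (nonempty) sums of elements of `I`
that are less than one. -/
def Iplus (I : Set ℝ) : Set ℝ :=
  {x | ∃ l : List ℝ, l ≠ [] ∧ (∀ y ∈ l, y ∈ I) ∧ l.sum = x ∧ x < 1}

/-- `DD I` : the set of `a ≤ 1` of the form `(m-1)/m + f/m` with `m` a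
positive integer and `f ∈ Iplus I`. -/
def DD (I : Set ℝ) : Set ℝ :=
  {a | a ≤ 1 ∧ ∃ m : ℕ, 0 < m ∧ ∃ f ∈ Iplus I, a = ((m : ℝ) - 1) / m + f / m}

/-- A set of reals satisfies DCC if it contains no infinite strictly
decreasing sequence. -/
def DCC (S : Set ℝ) : Prop := ¬ ∃ f : ℕ → ℝ, (∀ n, f n ∈ S) ∧ StrictAnti f

/-- A set of reals satisfies ACC if it contains no infinite strictly
increasing sequence. -/
def ACC (S : Set ℝ) : Prop := ¬ ∃ f : ℕ → ℝ, (∀ n, f n ∈ S) ∧ StrictMono f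

lemma Iplus_pos {I : Set ℝ} (hI : I ⊆ Set.Ioc 0 1) {f : ℝ} (hf : f ∈ Iplus I) : 0 < f := by
  obtain ⟨l, hne, hmem, hsum, _⟩ := hf
  rw [← hsum]
  exact List.sum_pos l (fun x hx => (hI (hmem x hx)).1) hne

lemma Iplus_lt_one {I : Set ℝ} {f : ℝ} (hf : f ∈ Iplus I) : f < 1 := by
  obtain ⟨_, _, _, _, h⟩ := hf; exact h

lemma DD_pos {I : Set ℝ} (hI : I ⊆ Set.Ioc 0 1) {b : ℝ} (hb : b ∈ DD I) : 0 < b := by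
  obtain ⟨_, m, hm, f, hf, rfl⟩ := hb
  have hfpos := Iplus_pos hI hf
  have hm1 : (1 : ℝ) ≤ m := by exact_mod_cast hm
  have hmpos : (0 : ℝ) < m := by linarith
  have h1 : (0:ℝ) ≤ ((m : ℝ) - 1) / m := div_nonneg (by linarith) (le_of_lt hmpos)
  have h2 : (0:ℝ) < f / m := div_pos hfpos hmpos
  linarith

lemma DD_lt_one {I : Set ℝ} {b : ℝ} (hb : b ∈ DD I) : b < 1 := by
  obtain ⟨_, m, hm, f, hf, rfl⟩ := hb
  have hf1 := Iplus_lt_one hf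
  have hm1 : (1 : ℝ) ≤ m := by exact_mod_cast hm
  have hmpos : (0 : ℝ) < m := by linarith
  rw [← add_div, div_lt_one hmpos]
  linarith

lemma replicate_join_sum (n : ℕ) (L : List ℝ) :
    ((List.replicate n L).flatten).sum = (n : ℝ) * L.sum := by
  rw [List.sum_flatten, List.map_replicate, List.sum_replicate, nsmul_eq_mul]

lemma key (I : Set ℝ) (hI : I ⊆ Set.Ioc 0 1) :
    ∀ l : List ℝ, l ≠ [] → (∀ b ∈ l, b ∈ DD I) → l.sum < 1 →
    ∃ n : ℕ, 0 < n ∧ ∃ L : List ℝ, L ≠ [] ∧ (∀ y ∈ L, y ∈ I) ∧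
      l.sum = ((n : ℝ) - 1) / n + L.sum / n := by
  intro l
  induction l with
  | nil => intro h; exact absurd rfl h
  | cons b t ih =>
    intro _ hmem hsum
    have hb : b ∈ DD I := hmem b (List.mem_cons_self)
    obtain ⟨_, m, hm, g, hg, hbe⟩ := hb
    have hgpos := Iplus_pos hI hg
    obtain ⟨Lg, hLgne, hLgmem, hLgsum, hg1⟩ := hg
    have hm1 : (1 : ℝ) ≤ m := by exact_mod_cast hm
    have hmpos : (0 : ℝ) < m := by linarith
    by_cases ht : t = []
    · subst ht
      refine ⟨m, hm, Lg, hLgne, hLgmem, ?_⟩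
      simp [hbe, hLgsum]
    · have hbpos : 0 < b := by
        rw [hbe]
        have h1 : (0:ℝ) ≤ ((m : ℝ) - 1) / m := div_nonneg (by linarith) (le_of_lt hmpos)
        have h2 : (0:ℝ) < g / m := div_pos hgpos hmpos
        linarith
      have htsum : t.sum < 1 := by
        have : (b :: t).sum = b + t.sum := by simp
        linarith [hsum, this ▸ hsum]
      obtain ⟨n, hn, L', hL'ne, hL'mem, hts⟩ := ih ht (fun x hx => hmem x (List.mem_cons_of_mem b hx)) htsum
      have hn1 : (1 : ℝ) ≤ n := by exact_mod_cast hn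
      have hnpos : (0 : ℝ) < n := by linarith
      have hL'pos : 0 < L'.sum :=
        List.sum_pos L' (fun x hx => (hI (hL'mem x hx)).1) hL'ne
      have hcons : (b :: t).sum = b + t.sum := by simp
      have hcase : m = 1 ∨ n = 1 := by
        by_contra hcon
        push_neg at hcon
        have hm2 : (2 : ℝ) ≤ m := by
          have : 2 ≤ m := by omega
          exact_mod_cast this
        have hn2 : (2 : ℝ) ≤ n := by
          have : 2 ≤ n := by omega
          exact_mod_cast this
        have h1 : (1:ℝ)/2 ≤ ((m : ℝ) - 1) / m := by
          rw [le_div_iff₀ hmpos]; linarith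
        have h2 : (1:ℝ)/2 ≤ ((n : ℝ) - 1) / n := by
          rw [le_div_iff₀ hnpos]; linarith
        have h3 : (0:ℝ) < g / m := div_pos hgpos hmpos
        have h4 : (0:ℝ) < L'.sum / n := div_pos hL'pos hnpos
        rw [hcons] at hsum
        rw [hbe] at hsum
        rw [hts] at hsum
        linarith
      rcases hcase with h1 | h1
      · -- m = 1, so b = g
        subst h1
        have hbg : b = g := by norm_num at hbe; exact hbe
        refine ⟨n, hn, L' ++ (List.replicate n Lg).flatten, by simp [hL'ne], ?_, ?_⟩
        · intro y hy
          rcases List.mem_append.mp hy with h | h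
          · exact hL'mem y h
          · obtain ⟨l', hl', hyl⟩ := List.mem_flatten.mp h
            exact hLgmem y ((List.eq_of_mem_replicate hl') ▸ hyl)
        · rw [hcons, List.sum_append, replicate_join_sum, hLgsum, hts, hbg]
          field_simp
          ring
      · -- n = 1, so t.sum = L'.sum
        subst h1
        have hts' : t.sum = L'.sum := by norm_num at hts; exact hts
        refine ⟨m, hm, Lg ++ (List.replicate m L').flatten, by simp [hLgne], ?_, ?_⟩
        · intro y hy
          rcases List.mem_append.mp hy with h | h
          · exact hLgmem y h
          · obtain ⟨l', hl', hyl⟩ := List.mem_flatten.mp h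
            exact hL'mem y ((List.eq_of_mem_replicate hl') ▸ hyl)
        · rw [hcons, List.sum_append, replicate_join_sum, hLgsum, hts', hbe]
          field_simp
          ring

/-- Lemma 4.4(2): `D(D(I)) = D(I)`. -/
theorem DD_DD_eq (I : Set ℝ) (hI : I ⊆ Set.Ioc 0 1) (h1 : (1 : ℝ) ∈ I) :
    DD (DD I) = DD I := by
  have hDDsub : DD I ⊆ Set.Ioc 0 1 := fun b hb => ⟨DD_pos hI hb, le_of_lt (DD_lt_one hb)⟩
  ext a
  constructor
  · rintro ⟨ha1, m, hm, f, hf, rfl⟩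
    obtain ⟨l, hlne, hlmem, hlsum, hf1⟩ := hf
    obtain ⟨n, hn, L, hLne, hLmem, hfs⟩ := key I hI l hlne hlmem (hlsum ▸ hf1)
    rw [hlsum] at hfs
    have hm1 : (1 : ℝ) ≤ m := by exact_mod_cast hm
    have hn1 : (1 : ℝ) ≤ n := by exact_mod_cast hn
    have hmpos : (0 : ℝ) < m := by linarith
    have hnpos : (0 : ℝ) < n := by linarith
    have hLlt : L.sum < 1 := by
      have : ((n : ℝ) - 1) / n + L.sum / n < 1 := hfs ▸ hf1
      rw [← add_div, div_lt_one hnpos] at this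
      linarith
    have hle : ((m : ℝ) - 1) / m + f / m ≤ 1 := by
      have hfpos : f < 1 := hf1
      rw [← add_div, div_le_one hmpos]; linarith
    refine ⟨hle, m * n, Nat.mul_pos hm hn, L.sum, ⟨L, hLne, hLmem, rfl, hLlt⟩, ?_⟩
    rw [hfs]
    push_cast
    field_simp
    ring
  · intro ha
    have halt : a < 1 := DD_lt_one ha
    refine ⟨ha.1, 1, one_pos, a, ⟨[a], by simp, by simpa using ha, by simp, halt⟩, by norm_num⟩
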